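/- For every r ∈ [−1,1], the function t ↦ ∫_{−1}^{1} P_t(r, r′)·r′ dr′ is differentiable on (0,∞), and its derivative equals (1/2)·(P_t(r, −1) − P_t(r, 1)) for every t > 0. -/

import Mathlib

open MeasureTheory

/-- The Gaussian heat kernel on the real line. -/
noncomputable def G (t r r' : ℝ) : ℝ :=
  Real.exp (-(r - r') ^ 2 / (2 * t)) / Real.sqrt (2 * Real.pi * t)

/-- The Neumann heat kernel on `[-1,1]`, obtained from the Gaussian kernel by
the reflection map: for `r' ∈ (-1,1)`,
`P t r r' = ∑_{n∈ℤ} [G t r (r'+4n) + G t r (2−r'+4n)]`, while at the boundary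
`P t r (±1) = ∑_{n∈ℤ} 2·G t r (±1+4n)`. -/
noncomputable def P (t r r' : ℝ) : ℝ :=
  if r' = 1 ∨ r' = -1 then ∑' n : ℤ, 2 * G t r (r' + 4 * n)
  else ∑' n : ℤ, (G t r (r' + 4 * n) + G t r (2 - r' + 4 * n))


lemma G_nonneg (t r s : ℝ) : 0 ≤ G t r s := by
  unfold G; positivity

lemma G_le (t r s : ℝ) (ht : 0 < t) : G t r s ≤ (Real.sqrt (2 * Real.pi * t))⁻¹ := by
  unfold G
  rw [div_eq_mul_inv]
  have h1 : Real.exp (-(r - s) ^ 2 / (2 * t)) ≤ 1 := by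
    rw [Real.exp_le_one_iff]
    apply div_nonpos_of_nonpos_of_nonneg
    · nlinarith [sq_nonneg (r - s)]
    · positivity
  have : (0:ℝ) ≤ (Real.sqrt (2 * Real.pi * t))⁻¹ := by positivity
  nlinarith

@[fun_prop]
lemma contG (t r : ℝ) : Continuous fun s => G t r s := by
  unfold G; fun_prop

/-- master summability -/
lemma summableM (q A B : ℝ) (hq0 : 0 ≤ q) (hq1 : q < 1) :
    Summable (fun n : ℤ => (A + B * |(n : ℝ)|) * q ^ n.natAbs) := by
  have key : Summable (fun n : ℕ => (A + B * (n : ℝ)) * q ^ n) := by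
    have h1 : Summable (fun n : ℕ => A * q ^ n) :=
      (summable_geometric_of_lt_one hq0 hq1).mul_left A
    have h2 : Summable (fun n : ℕ => B * ((n : ℝ) * q ^ n)) := by
      have := summable_pow_mul_geometric_of_norm_lt_one (R := ℝ) 1
        (r := q) (by rwa [Real.norm_eq_abs, abs_of_nonneg hq0])
      simpa using this.mul_left B
    have := h1.add h2
    apply this.congr
    intro n; ring
  apply Summable.of_nat_of_neg
  · apply key.congr; intro n; simp
  · apply key.congr; intro n; simp

lemma summable_of_boundM {f : ℤ → ℝ} (q A B : ℝ) (hq0 : 0 ≤ q) (hq1 : q < 1)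
    (h : ∀ n : ℤ, ‖f n‖ ≤ (A + B * |(n : ℝ)|) * q ^ n.natAbs) : Summable f :=
  Summable.of_norm_bounded (summableM q A B hq0 hq1) h

lemma abs_lower (n : ℤ) (j r : ℝ) (hr : |r| ≤ 1) (hj : |j| ≤ 4) :
    4 * |(n : ℝ)| - 5 ≤ |r - (4 * n + j)| := by
  have k1 : |4 * (n:ℝ) + j| ≤ |4 * (n:ℝ) + j - r| + |r| := by
    have := abs_add_le (4 * (n:ℝ) + j - r) r
    simpa using this
  have k2 : |4 * (n:ℝ)| ≤ |4 * (n:ℝ) + j| + |j| := by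
    have := abs_add_le (4 * (n:ℝ) + j) (-j)
    simpa using this
  have k3 : |4 * (n:ℝ)| = 4 * |(n:ℝ)| := by
    rw [abs_mul]; norm_num
  have k4 : |r - (4 * ↑n + j)| = |4 * (n:ℝ) + j - r| := by
    rw [abs_sub_comm]
  linarith

lemma sq_lower (n : ℤ) (x : ℝ) (h : 4 * |(n : ℝ)| - 5 ≤ |x|) :
    8 * |(n : ℝ)| - 11 ≤ x ^ 2 := by
  nlinarith [sq_abs x, sq_nonneg (|x| - 1), abs_nonneg x, abs_nonneg ((n:ℝ))]

lemma natAbs_cast (n : ℤ) : ((n.natAbs : ℝ)) = |(n : ℝ)| := by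
  simp [Nat.cast_natAbs]

lemma G_decay (t r j : ℝ) (n : ℤ) (ht : 0 < t) (hr : |r| ≤ 1) (hj : |j| ≤ 4) :
    G t r (4 * n + j) ≤
      Real.exp (11 / (2 * t)) / Real.sqrt (2 * Real.pi * t) * Real.exp (-(4 / t)) ^ n.natAbs := by
  have hx : 8 * |(n : ℝ)| - 11 ≤ (r - (4 * n + j)) ^ 2 :=
    sq_lower n _ (abs_lower n j r hr hj)
  have hS : 0 < Real.sqrt (2 * Real.pi * t) := by positivity
  unfold G
  rw [div_mul_eq_mul_div, div_le_div_iff_of_pos_right hS]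
  rw [← Real.exp_nat_mul, ← Real.exp_add, Real.exp_le_exp, natAbs_cast]
  have hrw : 11 / (2*t) + (|(n:ℝ)|) * -(4/t) = (11 - 8*|(n:ℝ)|) / (2*t) := by
    field_simp; ring
  rw [hrw, div_le_div_iff_of_pos_right (by positivity : (0:ℝ) < 2*t)]
  linarith [hx]

noncomputable def DG (t r s : ℝ) : ℝ :=
  G t r s * ((r - s) ^ 2 / (2 * t ^ 2) - 1 / (2 * t))

noncomputable def A (t r c s : ℝ) : ℝ :=
  ((r - s) / t * G t r s * (s - c) - G t r s) / 2

lemma contDG (t r : ℝ) : Continuous fun s => DG t r s := by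
  unfold DG G; fun_prop

lemma Gt_algebra (E S p t r s : ℝ) (hsq : S^2 = 2*p*t) (hS : S ≠ 0) (ht : t ≠ 0) :
    E/S * ((r-s)^2/(2*t^2) - 1/(2*t)) = (E*((r-s)^2/(2*t^2))*S - E*(p/S))/S^2 := by
  field_simp
  linear_combination (-(E * t)) * hsq

lemma hasDerivAt_G_t (r s t : ℝ) (ht : 0 < t) :
    HasDerivAt (fun t' => G t' r s) (DG t r s) t := by
  have hπ := Real.pi_pos
  have h2t : (2 : ℝ) * t ≠ 0 := by positivity
  have hper : (2 : ℝ) * Real.pi * t ≠ 0 := by positivity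
  have hS : 0 < Real.sqrt (2 * Real.pi * t) := Real.sqrt_pos.mpr (by positivity)
  -- numerator derivative
  have h1 : HasDerivAt (fun t' : ℝ => 2 * t') 2 t := by
    simpa using (hasDerivAt_id t).const_mul 2
  have h2 : HasDerivAt (fun t' : ℝ => (2 * t')⁻¹) (-2 / (2 * t) ^ 2) t := h1.inv h2t
  have h3 : HasDerivAt (fun t' : ℝ => -(r - s) ^ 2 / (2 * t'))
      ((r - s) ^ 2 / (2 * t ^ 2)) t := by
    have := h2.const_mul (-(r - s) ^ 2)
    have heq : (fun t' : ℝ => -(r - s) ^ 2 * (2 * t')⁻¹)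
        = fun t' : ℝ => -(r - s) ^ 2 / (2 * t') := by
      funext t'; rw [div_eq_mul_inv]
    rw [heq] at this
    refine this.congr_deriv ?_
    field_simp
  have h4 : HasDerivAt (fun t' : ℝ => Real.exp (-(r - s) ^ 2 / (2 * t')))
      (Real.exp (-(r - s) ^ 2 / (2 * t)) * ((r - s) ^ 2 / (2 * t ^ 2))) t :=
    (Real.hasDerivAt_exp _).comp t h3
  -- denominator derivative
  have h5 : HasDerivAt (fun t' : ℝ => 2 * Real.pi * t') (2 * Real.pi) t := by
    simpa using (hasDerivAt_id t).const_mul (2 * Real.pi)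
  have h6 : HasDerivAt (fun t' : ℝ => Real.sqrt (2 * Real.pi * t'))
      (Real.pi / Real.sqrt (2 * Real.pi * t)) t := by
    have := (Real.hasDerivAt_sqrt hper).comp t h5
    refine this.congr_deriv ?_
    field_simp
  have h7 := h4.div h6 (ne_of_gt hS)
  refine h7.congr_deriv ?_
  symm
  unfold DG G
  have hsq : Real.sqrt (2 * Real.pi * t) ^ 2 = 2 * Real.pi * t :=
    Real.sq_sqrt (by positivity)
  exact Gt_algebra _ _ _ t r s hsq (ne_of_gt hS) (ne_of_gt ht)

lemma hasDerivAt_G_s (t r s : ℝ) (ht : 0 < t) :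
    HasDerivAt (fun s' => G t r s') ((r - s) / t * G t r s) s := by
  have h1 : HasDerivAt (fun s' : ℝ => -(r - s') ^ 2 / (2 * t)) ((r - s) / t) s := by
    have h0 : HasDerivAt (fun s' : ℝ => r - s') (-1) s := by
      simpa using (hasDerivAt_id s).const_sub r
    have h2 : HasDerivAt (fun s' : ℝ => (r - s') ^ 2) (2 * (r - s) * (-1)) s := by
      have := h0.pow 2
      refine this.congr_deriv ?_
      ring
    have := (h2.neg).div_const (2 * t)
    refine this.congr_deriv ?_
    field_simp
  have h3 := ((Real.hasDerivAt_exp _).comp s h1).div_const (Real.sqrt (2 * Real.pi * t))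
  refine h3.congr_deriv ?_
  symm
  unfold G
  ring

lemma hasDerivAt_A (t r c s : ℝ) (ht : 0 < t) :
    HasDerivAt (fun s' => A t r c s') (DG t r s * (s - c)) s := by
  have hG := hasDerivAt_G_s t r s ht
  have h1 : HasDerivAt (fun s' : ℝ => (r - s') / t) (-1 / t) s := by
    have : HasDerivAt (fun s' : ℝ => r - s') (-1) s := by
      simpa using (hasDerivAt_id s).const_sub r
    simpa using this.div_const t
  have h2 := (h1.mul hG).mul ((hasDerivAt_id s).sub_const c)
  have h3 := ((h2.sub hG).div_const 2)
  refine h3.congr_deriv ?_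
  symm
  unfold DG
  simp only [id, Pi.mul_apply]
  field_simp
  ring

lemma DG_bound (t r s τ : ℝ) (ht : 0 < t) (hτ : τ ∈ Metric.ball t (t/2)) (c : ℝ) :
    ‖DG τ r s * (s - c)‖ ≤ (2 * (r - s) ^ 2 / t ^ 2 + 1 / t) * |s - c| / Real.sqrt (Real.pi * t) := by
  have hd : |τ - t| < t / 2 := by
    have := Metric.mem_ball.mp hτ; rwa [Real.dist_eq] at this
  have h1 : t / 2 < τ := by cases abs_lt.mp hd; linarith
  have h2 : 0 < τ := by linarith
  have hS : Real.sqrt (Real.pi * t) ≤ Real.sqrt (2 * Real.pi * τ) := by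
    apply Real.sqrt_le_sqrt
    nlinarith [Real.pi_pos]
  have hS0 : 0 < Real.sqrt (Real.pi * t) := by positivity
  have hGle : G τ r s ≤ (Real.sqrt (Real.pi * t))⁻¹ := by
    refine le_trans (G_le τ r s h2) ?_
    exact inv_anti₀ hS0 hS
  have hfac : |(r - s) ^ 2 / (2 * τ ^ 2) - 1 / (2 * τ)| ≤ 2 * (r - s) ^ 2 / t ^ 2 + 1 / t := by
    have h3 : (0:ℝ) ≤ (r - s) ^ 2 / (2 * τ ^ 2) := by positivity
    have h4 : 1 / (2 * τ) ≤ 1 / t := by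
      rw [div_le_div_iff₀ (by linarith) ht]; linarith
    have h5 : (0:ℝ) ≤ 2 * (r - s) ^ 2 / t ^ 2 := by positivity
    have h6 : (r - s) ^ 2 / (2 * τ ^ 2) ≤ 2 * (r - s) ^ 2 / t ^ 2 := by
      rw [div_le_div_iff₀ (by positivity) (by positivity)]
      have ht2 : t ^ 2 ≤ 4 * τ ^ 2 := by nlinarith
      nlinarith [sq_nonneg (r - s)]
    have h7 : (0:ℝ) < 1 / (2 * τ) := by positivity
    have h8 : (0:ℝ) < 1 / t := by positivity
    rw [abs_le]
    constructor <;> linarith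
  have e1 : ‖DG τ r s * (s - c)‖
      = G τ r s * |(r - s) ^ 2 / (2 * τ ^ 2) - 1 / (2 * τ)| * |s - c| := by
    unfold DG
    rw [norm_mul, norm_mul, Real.norm_eq_abs, Real.norm_eq_abs, Real.norm_eq_abs,
      abs_of_nonneg (G_nonneg τ r s)]
  rw [e1]
  calc G τ r s * |(r - s) ^ 2 / (2 * τ ^ 2) - 1 / (2 * τ)| * |s - c|
      ≤ (Real.sqrt (Real.pi * t))⁻¹ * (2 * (r - s) ^ 2 / t ^ 2 + 1 / t) * |s - c| := by
        apply mul_le_mul ?_ le_rfl (abs_nonneg _) (by positivity)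
        exact mul_le_mul hGle hfac (abs_nonneg _) (by positivity)
    _ = (2 * (r - s) ^ 2 / t ^ 2 + 1 / t) * |s - c| / Real.sqrt (Real.pi * t) := by
        ring

lemma I_hasDerivAt (τ r a b c : ℝ) (hτ : 0 < τ) :
    HasDerivAt (fun τ' => ∫ s in a..b, G τ' r s * (s - c))
      (A τ r c b - A τ r c a) τ := by
  have key := intervalIntegral.hasDerivAt_integral_of_dominated_loc_of_deriv_le
    (μ := volume) (F := fun τ' s => G τ' r s * (s - c)) (F' := fun τ' s => DG τ' r s * (s - c))
    (x₀ := τ) (a := a) (b := b)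
    (bound := fun s => (2 * (r - s) ^ 2 / τ ^ 2 + 1 / τ) * |s - c| / Real.sqrt (Real.pi * τ))
    (Metric.ball_mem_nhds τ (half_pos hτ))
    (Filter.Eventually.of_forall fun τ' =>
      (((contG τ' r).mul (by fun_prop)).aestronglyMeasurable).restrict)
    (((contG τ r).mul (by fun_prop)).intervalIntegrable a b)
    ((((contDG τ r).mul (by fun_prop)).aestronglyMeasurable).restrict)
    (Filter.Eventually.of_forall fun s _ => fun x hx => DG_bound τ r s x hτ hx c)
    (((by fun_prop : Continuous fun s : ℝ => (2 * (r - s) ^ 2 / τ ^ 2 + 1 / τ) * |s - c| / Real.sqrt (Real.pi * τ))).intervalIntegrable a b)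
    (Filter.Eventually.of_forall fun s _ => fun x hx => by
      have hd : |x - τ| < τ / 2 := by
        have := Metric.mem_ball.mp hx; rwa [Real.dist_eq] at this
      have hx0 : 0 < x := by cases abs_lt.mp hd; linarith
      exact (hasDerivAt_G_t r s x hx0).mul_const (s - c))
  have h2 := key.2
  have heq : ∫ s in a..b, DG τ r s * (s - c) = A τ r c b - A τ r c a := by
    apply intervalIntegral.integral_eq_sub_of_hasDerivAt
    · intro x _
      exact hasDerivAt_A τ r c x hτ
    · exact ((contDG τ r).mul (by fun_prop)).intervalIntegrable a b
  rwa [heq] at h2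

noncomputable def f (r : ℝ) (n : ℤ) (τ : ℝ) : ℝ :=
  ∫ r' in (-1 : ℝ)..1, (G τ r (r' + 4 * n) + G τ r (2 - r' + 4 * n)) * r'

noncomputable def f' (r : ℝ) (n : ℤ) (τ : ℝ) : ℝ :=
  (A τ r (4 * n) (4 * n + 1) - A τ r (4 * n) (4 * n - 1))
    - (A τ r (4 * n + 2) (4 * n + 3) - A τ r (4 * n + 2) (4 * n + 1))

lemma f_eq (r : ℝ) (n : ℤ) (τ : ℝ) :
    f r n τ = (∫ s in (4 * (n:ℝ) - 1)..(4 * (n:ℝ) + 1), G τ r s * (s - 4 * n))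
      - ∫ s in (4 * (n:ℝ) + 1)..(4 * (n:ℝ) + 3), G τ r s * (s - (4 * n + 2)) := by
  unfold f
  have hsplit : ∀ r' : ℝ, (G τ r (r' + 4 * n) + G τ r (2 - r' + 4 * n)) * r'
      = G τ r (r' + 4 * n) * r' + G τ r (2 - r' + 4 * n) * r' := fun r' => by ring
  simp only [hsplit]
  have c1 : Continuous fun r' : ℝ => G τ r (r' + 4 * (n:ℝ)) * r' := by fun_prop
  have c2 : Continuous fun r' : ℝ => G τ r (2 - r' + 4 * (n:ℝ)) * r' := by fun_prop
  rw [intervalIntegral.integral_add (c1.intervalIntegrable _ _) (c2.intervalIntegrable _ _)]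
  congr 1
  · have h1 : ∀ r' : ℝ, G τ r (r' + 4 * n) * r'
        = (fun s => G τ r s * (s - 4 * n)) (r' + 4 * (n:ℝ)) := by
      intro r'; simp only []; rw [add_sub_cancel_right]
    simp only [h1]
    rw [intervalIntegral.integral_comp_add_right (fun s => G τ r s * (s - 4 * n)) (4 * (n:ℝ))]
    norm_num
    rw [show (-1 : ℝ) + 4 * n = 4 * (n:ℝ) - 1 by ring, show (1 : ℝ) + 4 * n = 4 * (n:ℝ) + 1 by ring]
  · have h2 : ∀ r' : ℝ, G τ r (2 - r' + 4 * n) * r'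
        = (fun s => G τ r s * ((4 * (n:ℝ) + 2) - s)) ((4 * (n:ℝ) + 2) - r') := by
      intro r'
      simp only []
      have e1 : (2 : ℝ) - r' + 4 * n = 4 * (n:ℝ) + 2 - r' := by ring
      have e2 : 4 * (n:ℝ) + 2 - (4 * (n:ℝ) + 2 - r') = r' := by ring
      rw [e1, e2]
    simp only [h2]
    rw [intervalIntegral.integral_comp_sub_left (fun s => G τ r s * ((4 * (n:ℝ) + 2) - s)) (4 * (n:ℝ) + 2)]
    have e3 : 4 * (n:ℝ) + 2 - 1 = 4 * (n:ℝ) + 1 := by ring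
    have e4 : 4 * (n:ℝ) + 2 - -1 = 4 * (n:ℝ) + 3 := by ring
    rw [e3, e4]
    rw [← intervalIntegral.integral_neg]
    congr 1
    funext s
    push_cast
    ring

lemma f_hasDerivAt (r : ℝ) (n : ℤ) (τ : ℝ) (hτ : 0 < τ) :
    HasDerivAt (f r n) (f' r n τ) τ := by
  have h1 := I_hasDerivAt τ r (4 * (n:ℝ) - 1) (4 * (n:ℝ) + 1) (4 * n) hτ
  have h2 := I_hasDerivAt τ r (4 * (n:ℝ) + 1) (4 * (n:ℝ) + 3) (4 * n + 2) hτ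
  have h3 := h1.sub h2
  have heq : (fun τ' => (∫ s in (4 * (n:ℝ) - 1)..(4 * (n:ℝ) + 1), G τ' r s * (s - 4 * n))
      - ∫ s in (4 * (n:ℝ) + 1)..(4 * (n:ℝ) + 3), G τ' r s * (s - (4 * n + 2))) = f r n := by
    funext τ'
    rw [f_eq]
  rw [← heq]
  exact h3

lemma G_mid_decay (t r : ℝ) (ht : 0 < t) (hr : |r| ≤ 1) (n : ℤ) (j τ' : ℝ) (hj : |j| ≤ 4)
    (hτ' : τ' ∈ Set.Ioo (t/2) (2*t)) :
    G τ' r (4 * n + j) ≤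
      Real.exp (11 / (4 * t)) / Real.sqrt (Real.pi * t) * Real.exp (-(2 / t)) ^ n.natAbs := by
  obtain ⟨hlo, hhi⟩ := hτ'
  have hτ0 : 0 < τ' := by linarith
  have hx : 8 * |(n : ℝ)| - 11 ≤ (r - (4 * n + j)) ^ 2 :=
    sq_lower n _ (abs_lower n j r hr hj)
  have hS : Real.sqrt (Real.pi * t) ≤ Real.sqrt (2 * Real.pi * τ') := by
    apply Real.sqrt_le_sqrt; nlinarith [Real.pi_pos]
  have hS0 : 0 < Real.sqrt (Real.pi * t) := by positivity
  have hexp : Real.exp (-(r - (4 * n + j)) ^ 2 / (2 * τ'))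
      ≤ Real.exp (11 / (4 * t)) * Real.exp (-(2 / t)) ^ n.natAbs := by
    rw [← Real.exp_nat_mul, ← Real.exp_add, Real.exp_le_exp, natAbs_cast]
    have h1 : -(r - (4 * n + j)) ^ 2 / (2 * τ') ≤ -(r - (4 * n + j)) ^ 2 / (4 * t) := by
      have h1' : (r - (4 * n + j)) ^ 2 / (4 * t) ≤ (r - (4 * n + j)) ^ 2 / (2 * τ') := by
        apply div_le_div_of_nonneg_left (sq_nonneg _) (by linarith) (by linarith)
      rw [neg_div, neg_div]
      exact neg_le_neg h1'
    have hrw : 11 / (4 * t) + |(n:ℝ)| * -(2 / t) = (11 - 8 * |(n:ℝ)|) / (4 * t) := by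
      field_simp; ring
    rw [hrw]
    refine le_trans h1 ?_
    rw [div_le_div_iff_of_pos_right (by positivity : (0:ℝ) < 4 * t)]
    linarith
  unfold G
  rw [div_mul_eq_mul_div]
  calc Real.exp (-(r - (4 * ↑n + j)) ^ 2 / (2 * τ')) / Real.sqrt (2 * Real.pi * τ')
      ≤ (Real.exp (11 / (4 * t)) * Real.exp (-(2 / t)) ^ n.natAbs) / Real.sqrt (Real.pi * t) := by
        apply div_le_div₀ (by positivity) hexp hS0 hS
    _ = _ := by rw []

lemma A_bound (t r : ℝ) (ht : 0 < t) (hr : |r| ≤ 1) (n : ℤ) (j c τ' : ℝ) (hj : |j| ≤ 4)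
    (hc : |(4 * (n:ℝ) + j) - c| ≤ 1) (hτ' : τ' ∈ Set.Ioo (t/2) (2*t)) :
    |A τ' r c (4 * n + j)| ≤ (10/t + 1)/2 * (Real.exp (11/(4*t)) / Real.sqrt (Real.pi * t))
      * (1 + |(n:ℝ)|) * Real.exp (-(2/t)) ^ n.natAbs := by
  obtain ⟨hlo, hhi⟩ := hτ'
  have hτ0 : 0 < τ' := by linarith
  set x : ℝ := 4 * (n:ℝ) + j with hx
  set Gv : ℝ := G τ' r x with hGv
  have hGv0 : 0 ≤ Gv := G_nonneg τ' r x
  have hGvle : Gv ≤ Real.exp (11/(4*t)) / Real.sqrt (Real.pi * t) * Real.exp (-(2/t)) ^ n.natAbs :=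
    G_mid_decay t r ht hr n j τ' hj ⟨hlo, hhi⟩
  set C : ℝ := Real.exp (11/(4*t)) / Real.sqrt (Real.pi * t) with hC
  set Q : ℝ := Real.exp (-(2/t)) ^ n.natAbs with hQ
  have hC0 : 0 < C := by rw [hC]; positivity
  have hQ0 : 0 < Q := by rw [hQ]; positivity
  have h3 : |r - x| ≤ 4 * |(n:ℝ)| + 5 := by
    have e1 : |r - x| ≤ |r| + |x| := abs_sub r x
    have e2 : |x| ≤ |4 * (n:ℝ)| + |j| := abs_add_le _ _
    have e3 : |4 * (n:ℝ)| = 4 * |(n:ℝ)| := by rw [abs_mul]; norm_num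
    linarith
  have h4 : 1/τ' ≤ 2/t := by
    rw [div_le_div_iff₀ hτ0 ht]; linarith
  have e1 : |A τ' r c x| ≤ (|r - x|/τ' * |x - c| * Gv + Gv)/2 := by
    unfold A
    rw [abs_div]
    have : |(2:ℝ)| = 2 := by norm_num
    rw [this]
    apply div_le_div_of_nonneg_right ?_ (by norm_num) |>.trans_eq rfl
    calc |(r - x)/τ' * G τ' r x * (x - c) - G τ' r x|
        ≤ |(r - x)/τ' * G τ' r x * (x - c)| + |G τ' r x| := abs_sub _ _
      _ = |r - x|/τ' * |x - c| * Gv + Gv := by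
          rw [abs_mul, abs_mul, abs_div, abs_of_pos hτ0, abs_of_nonneg (G_nonneg τ' r x)]
          ring
  have step1 : |r - x|/τ' ≤ (4 * |(n:ℝ)| + 5) * (2/t) := by
    calc |r - x|/τ' = |r - x| * (1/τ') := by ring
      _ ≤ (4 * |(n:ℝ)| + 5) * (2/t) :=
        mul_le_mul h3 h4 (by positivity) (by positivity)
  have step2 : |r - x|/τ' * |x - c| ≤ (4 * |(n:ℝ)| + 5) * (2/t) := by
    calc |r - x|/τ' * |x - c| ≤ |r - x|/τ' * 1 :=
          mul_le_mul_of_nonneg_left hc (by positivity)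
      _ = |r - x|/τ' := mul_one _
      _ ≤ _ := step1
  have step3 : |r - x|/τ' * |x - c| * Gv + Gv ≤ ((4 * |(n:ℝ)| + 5) * (2/t) + 1) * (C * Q) := by
    have hm : |r - x|/τ' * |x - c| * Gv ≤ (4 * |(n:ℝ)| + 5) * (2/t) * (C * Q) :=
      mul_le_mul step2 hGvle hGv0 (by positivity)
    nlinarith [hGvle, hGv0]
  have hfin : (4 * |(n:ℝ)| + 5) * (2/t) + 1 ≤ (10/t + 1) * (1 + |(n:ℝ)|) := by
    have e2 : (4 * |(n:ℝ)| + 5) * (2/t) + 1 = (8 * |(n:ℝ)| + 10 + t)/t := by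
      field_simp; ring
    have e3 : (10/t + 1) * (1 + |(n:ℝ)|) = (10 + t) * (1 + |(n:ℝ)|)/t := by
      field_simp
    rw [e2, e3, div_le_div_iff_of_pos_right ht]
    nlinarith [abs_nonneg ((n:ℝ))]
  calc |A τ' r c x| ≤ (|r - x|/τ' * |x - c| * Gv + Gv)/2 := e1
    _ ≤ ((4 * |(n:ℝ)| + 5) * (2/t) + 1) * (C * Q)/2 := by linarith
    _ ≤ (10/t + 1) * (1 + |(n:ℝ)|) * (C * Q)/2 := by
        have := mul_le_mul_of_nonneg_right hfin (by positivity : (0:ℝ) ≤ C * Q)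
        linarith
    _ = (10/t + 1)/2 * C * (1 + |(n:ℝ)|) * Q := by ring

noncomputable def K (t : ℝ) : ℝ := (10/t + 1)/2 * (Real.exp (11/(4*t)) / Real.sqrt (Real.pi * t))

lemma f'_bound (t r : ℝ) (ht : 0 < t) (hr : |r| ≤ 1) (n : ℤ) (τ' : ℝ)
    (hτ' : τ' ∈ Set.Ioo (t/2) (2*t)) :
    ‖f' r n τ'‖ ≤ 4 * K t * (1 + |(n:ℝ)|) * Real.exp (-(2/t)) ^ n.natAbs := by
  have hb1 := A_bound t r ht hr n 1 (4*n) τ' (by norm_num)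
    (by rw [show (4*(n:ℝ) + 1) - 4*(n:ℝ) = 1 by ring]; norm_num) hτ'
  have hb2 := A_bound t r ht hr n (-1) (4*n) τ' (by norm_num)
    (by rw [show (4*(n:ℝ) + (-1)) - 4*(n:ℝ) = -1 by ring]; norm_num) hτ'
  have hb3 := A_bound t r ht hr n 3 (4*n+2) τ' (by norm_num)
    (by rw [show (4*(n:ℝ) + 3) - (4*(n:ℝ)+2) = 1 by ring]; norm_num) hτ'
  have hb4 := A_bound t r ht hr n 1 (4*n+2) τ' (by norm_num)
    (by rw [show (4*(n:ℝ) + 1) - (4*(n:ℝ)+2) = -1 by ring]; norm_num) hτ'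
  rw [show (4*(n:ℝ) + (-1)) = 4*(n:ℝ) - 1 by ring] at hb2
  rw [Real.norm_eq_abs]
  unfold f'
  push_cast
  have h1 : |A τ' r (4*↑n) (4*↑n + 1) - A τ' r (4*↑n) (4*↑n - 1)
      - (A τ' r (4*↑n+2) (4*↑n+3) - A τ' r (4*↑n+2) (4*↑n+1))|
      ≤ |A τ' r (4*↑n) (4*↑n + 1)| + |A τ' r (4*↑n) (4*↑n - 1)|
        + |A τ' r (4*↑n+2) (4*↑n+3)| + |A τ' r (4*↑n+2) (4*↑n+1)| := by
    calc _ ≤ |A τ' r (4*↑n) (4*↑n + 1) - A τ' r (4*↑n) (4*↑n - 1)|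
        + |A τ' r (4*↑n+2) (4*↑n+3) - A τ' r (4*↑n+2) (4*↑n+1)| := abs_sub _ _
      _ ≤ _ := by
        have := abs_sub (A τ' r (4*(n:ℝ)) (4*↑n + 1)) (A τ' r (4*↑n) (4*↑n - 1))
        have := abs_sub (A τ' r (4*(n:ℝ)+2) (4*↑n+3)) (A τ' r (4*↑n+2) (4*↑n+1))
        linarith
  unfold K at *
  linarith

lemma f_bound (t r : ℝ) (ht : 0 < t) (hr : |r| ≤ 1) (n : ℤ) :
    ‖f r n t‖ ≤ 4 * (Real.exp (11/(2*t)) / Real.sqrt (2*Real.pi*t))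
      * Real.exp (-(4/t)) ^ n.natAbs := by
  set C : ℝ := Real.exp (11/(2*t)) / Real.sqrt (2*Real.pi*t) with hC
  set Q : ℝ := Real.exp (-(4/t)) ^ n.natAbs with hQ
  have hQ0 : 0 < Q := by rw [hQ]; positivity
  have hC0 : 0 < C := by rw [hC]; positivity
  rw [f_eq]
  have hI1 : ‖∫ s in (4 * (n:ℝ) - 1)..(4 * (n:ℝ) + 1), G t r s * (s - 4 * n)‖
      ≤ C * Q * |(4 * (n:ℝ) + 1) - (4 * (n:ℝ) - 1)| := by
    apply intervalIntegral.norm_integral_le_of_norm_le_const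
    intro x hx
    rw [Set.uIoc_of_le (by linarith : 4 * (n:ℝ) - 1 ≤ 4 * (n:ℝ) + 1)] at hx
    obtain ⟨hx1, hx2⟩ := hx
    have hj : |x - 4 * (n:ℝ)| ≤ 1 := by rw [abs_le]; constructor <;> linarith
    have hd := G_decay t r (x - 4 * (n:ℝ)) n ht hr (by rw [abs_le] at hj ⊢; constructor <;> linarith)
    rw [show 4 * (n:ℝ) + (x - 4 * (n:ℝ)) = x by ring] at hd
    rw [Real.norm_eq_abs, abs_mul, abs_of_nonneg (G_nonneg t r x)]
    calc G t r x * |x - 4 * ↑n| ≤ (C * Q) * 1 := by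
          apply mul_le_mul hd hj (abs_nonneg _) (by positivity)
      _ = C * Q := mul_one _
  have hI2 : ‖∫ s in (4 * (n:ℝ) + 1)..(4 * (n:ℝ) + 3), G t r s * (s - (4 * n + 2))‖
      ≤ C * Q * |(4 * (n:ℝ) + 3) - (4 * (n:ℝ) + 1)| := by
    apply intervalIntegral.norm_integral_le_of_norm_le_const
    intro x hx
    rw [Set.uIoc_of_le (by linarith : 4 * (n:ℝ) + 1 ≤ 4 * (n:ℝ) + 3)] at hx
    obtain ⟨hx1, hx2⟩ := hx
    have hj : |x - (4 * (n:ℝ) + 2)| ≤ 1 := by rw [abs_le]; constructor <;> linarith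
    have hd := G_decay t r (x - 4 * (n:ℝ)) n ht hr (by rw [abs_le] at hj ⊢; constructor <;> linarith)
    rw [show 4 * (n:ℝ) + (x - 4 * (n:ℝ)) = x by ring] at hd
    rw [Real.norm_eq_abs, abs_mul, abs_of_nonneg (G_nonneg t r x)]
    push_cast
    calc G t r x * |x - (4 * (n:ℝ) + 2)| ≤ (C * Q) * 1 := by
          apply mul_le_mul hd hj (abs_nonneg _) (by positivity)
      _ = C * Q := mul_one _
  rw [show |(4 * (n:ℝ) + 1) - (4 * (n:ℝ) - 1)| = 2 by rw [show (4 * (n:ℝ) + 1) - (4 * (n:ℝ) - 1) = 2 by ring]; norm_num] at hI1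
  rw [show |(4 * (n:ℝ) + 3) - (4 * (n:ℝ) + 1)| = 2 by rw [show (4 * (n:ℝ) + 3) - (4 * (n:ℝ) + 1) = 2 by ring]; norm_num] at hI2
  calc ‖_ - _‖ ≤ _ := norm_sub_le _ _
    _ ≤ C * Q * 2 + C * Q * 2 := add_le_add hI1 hI2
    _ = 4 * C * Q := by ring


lemma swap_lemma (r τ : ℝ) (hτ : 0 < τ) (hr : |r| ≤ 1) :
    (∫ r' in (-1:ℝ)..1, P τ r r' * r') = ∑' n : ℤ, f r n τ := by
  have hz : volume ({1, -1} : Set ℝ) = 0 := by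
    have : ({1, -1} : Set ℝ) = {1} ∪ {-1} := by rfl
    rw [this]
    exact measure_union_null (measure_singleton _) (measure_singleton _)
  have hae : ∀ᵐ x : ℝ, x ∈ Set.uIoc (-1:ℝ) 1 → P τ r x * x
      = (∑' n : ℤ, (G τ r (x + 4*n) + G τ r (2 - x + 4*n))) * x := by
    have hh : ∀ᵐ x : ℝ, x ∉ ({1, -1} : Set ℝ) := by
      rw [ae_iff]
      apply measure_mono_null _ hz
      intro a ha
      exact not_not.mp ha
    filter_upwards [hh] with x hx _
    simp only [Set.mem_insert_iff, Set.mem_singleton_iff] at hx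
    push_neg at hx
    rw [P, if_neg (by tauto)]
  rw [intervalIntegral.integral_congr_ae hae]
  have hcont : ∀ n : ℤ, Continuous fun x : ℝ => (G τ r (x + 4*n) + G τ r (2 - x + 4*n)) * x := by
    intro n; fun_prop
  set cf : ℤ → C(ℝ, ℝ) := fun n => ⟨fun x => (G τ r (x + 4*n) + G τ r (2 - x + 4*n)) * x, hcont n⟩
    with hcf
  have hsum : Summable fun n : ℤ =>
      ‖(cf n).restrict (⟨Set.uIcc (-1:ℝ) 1, isCompact_uIcc⟩ : TopologicalSpace.Compacts ℝ)‖ := by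
    apply summable_of_boundM (Real.exp (-(4/τ))) (2 * (Real.exp (11/(2*τ)) / Real.sqrt (2*Real.pi*τ))) 0
      (by positivity) (by rw [Real.exp_lt_one_iff, neg_lt_zero]; positivity)
    intro n
    rw [norm_norm, zero_mul, add_zero]
    apply (ContinuousMap.norm_le _ (by positivity)).mpr
    rintro ⟨x, hx⟩
    have hx' : x ∈ Set.Icc (-1:ℝ) 1 := by
      have hx2 : x ∈ Set.uIcc (-1:ℝ) 1 := hx
      rwa [Set.uIcc_of_le (by norm_num : (-1:ℝ) ≤ 1)] at hx2
    obtain ⟨hx1, hx2⟩ := hx'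
    have hxabs : |x| ≤ 1 := abs_le.mpr ⟨hx1, hx2⟩
    have hd1 := G_decay τ r x n hτ hr (by rw [abs_le] at hxabs ⊢; constructor <;> linarith)
    have hd2 := G_decay τ r (2 - x) n hτ hr (by rw [abs_le] at hxabs ⊢; constructor <;> linarith)
    rw [show 4 * (n:ℝ) + x = x + 4 * (n:ℝ) by ring] at hd1
    rw [show 4 * (n:ℝ) + (2 - x) = 2 - x + 4 * (n:ℝ) by ring] at hd2
    rw [ContinuousMap.restrict_apply]
    simp only [hcf, ContinuousMap.coe_mk]
    set C : ℝ := Real.exp (11/(2*τ)) / Real.sqrt (2*Real.pi*τ) with hC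
    set Q : ℝ := Real.exp (-(4/τ)) ^ n.natAbs with hQ
    have hQ0 : 0 < Q := by rw [hQ]; positivity
    rw [Real.norm_eq_abs, abs_mul]
    have hGG : 0 ≤ G τ r (x + 4*n) + G τ r (2 - x + 4*n) :=
      add_nonneg (G_nonneg _ _ _) (G_nonneg _ _ _)
    rw [abs_of_nonneg hGG]
    calc (G τ r (x + 4*n) + G τ r (2 - x + 4*n)) * |x| ≤ (C * Q + C * Q) * 1 := by
          apply mul_le_mul (add_le_add hd1 hd2) hxabs (abs_nonneg _) (by positivity)
      _ = 2 * C * Q := by ring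
  have hswap := intervalIntegral.tsum_intervalIntegral_eq_of_summable_norm
    (a := (-1:ℝ)) (b := 1) hsum
  have hpt : ∀ x : ℝ, (∑' n : ℤ, (G τ r (x + 4*n) + G τ r (2 - x + 4*n))) * x
      = ∑' n : ℤ, (cf n) x := by
    intro x
    simp only [hcf, ContinuousMap.coe_mk]
    rw [← tsum_mul_right]
  simp only [hpt]
  rw [← hswap]
  apply tsum_congr
  intro n
  rfl

noncomputable def w (t r : ℝ) (n : ℤ) : ℝ :=
  ((r - (4*n - 1))/t * G t r (4*n - 1) - G t r (4*n - 1))/2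

lemma f'_eq (t r : ℝ) (n : ℤ) :
    f' r n t = (G t r (4*(n:ℝ) - 1) - G t r (4*(n:ℝ) + 1)) + (w t r n - w t r (n+1)) := by
  unfold f' w A
  push_cast
  rw [show (4:ℝ)*((n:ℝ)+1) - 1 = 4*(n:ℝ)+3 by ring]
  ring

lemma summable_G_shift (t r j : ℝ) (ht : 0 < t) (hr : |r| ≤ 1) (hj : |j| ≤ 4) :
    Summable (fun n : ℤ => G t r (4*(n:ℝ) + j)) := by
  apply summable_of_boundM (Real.exp (-(4/t))) (Real.exp (11/(2*t)) / Real.sqrt (2*Real.pi*t)) 0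
    (by positivity) (by rw [Real.exp_lt_one_iff, neg_lt_zero]; positivity)
  intro n
  rw [zero_mul, add_zero, Real.norm_eq_abs, abs_of_nonneg (G_nonneg _ _ _)]
  exact G_decay t r j n ht hr hj

lemma summable_w (t r : ℝ) (ht : 0 < t) (hr : |r| ≤ 1) : Summable (w t r) := by
  apply summable_of_boundM (Real.exp (-(2/t))) (K t) (K t)
    (by positivity) (by rw [Real.exp_lt_one_iff, neg_lt_zero]; positivity)
  intro n
  have he : w t r n = A t r (4*(n:ℝ) - 2) (4*(n:ℝ) - 1) := by
    unfold w A; ring_nf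
  have hb := A_bound t r ht hr n (-1) (4*(n:ℝ) - 2) t (by norm_num)
    (by rw [show (4*(n:ℝ) + (-1)) - (4*(n:ℝ) - 2) = 1 by ring]; norm_num)
    ⟨by linarith, by linarith⟩
  rw [show (4*(n:ℝ) + (-1)) = 4*(n:ℝ) - 1 by ring] at hb
  rw [Real.norm_eq_abs, he]
  calc |A t r (4*(n:ℝ) - 2) (4*(n:ℝ) - 1)|
      ≤ (10/t + 1)/2 * (Real.exp (11/(4*t)) / Real.sqrt (Real.pi * t))
        * (1 + |(n:ℝ)|) * Real.exp (-(2/t)) ^ n.natAbs := hb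
    _ = (K t + K t * |(n:ℝ)|) * Real.exp (-(2/t)) ^ n.natAbs := by unfold K; ring

lemma sum_f' (t r : ℝ) (ht : 0 < t) (hr : |r| ≤ 1) :
    ∑' n : ℤ, f' r n t
      = (∑' n : ℤ, G t r (4*(n:ℝ) - 1)) - ∑' n : ℤ, G t r (4*(n:ℝ) + 1) := by
  have hS1 : Summable (fun n : ℤ => G t r (4*(n:ℝ) - 1)) := by
    have := summable_G_shift t r (-1) ht hr (by norm_num)
    apply this.congr
    intro n
    rw [show (4*(n:ℝ) + (-1)) = 4*(n:ℝ) - 1 by ring]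
  have hS2 : Summable (fun n : ℤ => G t r (4*(n:ℝ) + 1)) :=
    summable_G_shift t r 1 ht hr (by norm_num)
  have hSw : Summable (w t r) := summable_w t r ht hr
  have hSw' : Summable (fun n : ℤ => w t r (n+1)) :=
    hSw.comp_injective (add_left_injective 1)
  calc ∑' n : ℤ, f' r n t
      = ∑' n : ℤ, ((G t r (4*(n:ℝ) - 1) - G t r (4*(n:ℝ) + 1)) + (w t r n - w t r (n+1))) :=
        tsum_congr (fun n => f'_eq t r n)
    _ = (∑' n : ℤ, (G t r (4*(n:ℝ) - 1) - G t r (4*(n:ℝ) + 1)))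
        + ∑' n : ℤ, (w t r n - w t r (n+1)) := Summable.tsum_add (hS1.sub hS2) (hSw.sub hSw')
    _ = ((∑' n : ℤ, G t r (4*(n:ℝ) - 1)) - ∑' n : ℤ, G t r (4*(n:ℝ) + 1))
        + ((∑' n : ℤ, w t r n) - ∑' n : ℤ, w t r (n+1)) := by
        rw [Summable.tsum_sub hS1 hS2, Summable.tsum_sub hSw hSw']
    _ = _ := by
        have hre : ∑' n : ℤ, w t r (n+1) = ∑' n : ℤ, w t r n :=
          (Equiv.addRight (1:ℤ)).tsum_eq (w t r)
        rw [hre]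
        ring

/-- For every `r ∈ [−1,1]`, the function `t ↦ ∫_{−1}^{1} P_t(r,r')·r' dr'` is
differentiable on `(0,∞)` with derivative `(1/2)·(P_t(r,−1) − P_t(r,1))`. -/
theorem deriv_first_moment (r : ℝ) (hr : r ∈ Set.Icc (-1 : ℝ) 1)
    (t : ℝ) (ht : 0 < t) :
    HasDerivAt (fun τ : ℝ => ∫ r' in (-1 : ℝ)..1, P τ r r' * r')
      (1 / 2 * (P t r (-1) - P t r 1)) t := by
  have hr' : |r| ≤ 1 := abs_le.mpr ⟨hr.1, hr.2⟩
  have hu : Summable (fun n : ℤ =>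
      (4 * K t + 4 * K t * |(n:ℝ)|) * Real.exp (-(2/t)) ^ n.natAbs) :=
    summableM _ _ _ (by positivity) (by rw [Real.exp_lt_one_iff, neg_lt_zero]; positivity)
  have hg : ∀ (n : ℤ) (y : ℝ), y ∈ Set.Ioo (t/2) (2*t) → HasDerivAt (f r n) (f' r n y) y :=
    fun n y hy => f_hasDerivAt r n y (by have := hy.1; linarith)
  have hg' : ∀ (n : ℤ) (y : ℝ), y ∈ Set.Ioo (t/2) (2*t) →
      ‖f' r n y‖ ≤ (4 * K t + 4 * K t * |(n:ℝ)|) * Real.exp (-(2/t)) ^ n.natAbs := by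
    intro n y hy
    calc ‖f' r n y‖ ≤ 4 * K t * (1 + |(n:ℝ)|) * Real.exp (-(2/t)) ^ n.natAbs :=
          f'_bound t r ht hr' n y hy
      _ = _ := by ring
  have hg0 : Summable (fun n : ℤ => f r n t) := by
    apply summable_of_boundM (Real.exp (-(4/t)))
      (4 * (Real.exp (11/(2*t)) / Real.sqrt (2*Real.pi*t))) 0 (by positivity)
      (by rw [Real.exp_lt_one_iff, neg_lt_zero]; positivity)
    intro n
    rw [zero_mul, add_zero]
    exact f_bound t r ht hr' n
  have hmem : t ∈ Set.Ioo (t/2) (2*t) := ⟨by linarith, by linarith⟩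
  have hD := hasDerivAt_tsum_of_isPreconnected hu isOpen_Ioo isPreconnected_Ioo
    hg hg' hmem hg0 hmem
  have hval : (∑' n : ℤ, f' r n t) = 1/2 * (P t r (-1) - P t r 1) := by
    rw [sum_f' t r ht hr']
    have h1 : P t r (-1) = ∑' n : ℤ, 2 * G t r (-1 + 4*n) := by
      unfold P
      rw [if_pos (Or.inr rfl)]
    have h2 : P t r 1 = ∑' n : ℤ, 2 * G t r (1 + 4*n) := by
      unfold P
      rw [if_pos (Or.inl rfl)]
    rw [h1, h2, tsum_mul_left, tsum_mul_left]
    have e1 : ∑' n : ℤ, G t r (-1 + 4*(n:ℝ)) = ∑' n : ℤ, G t r (4*(n:ℝ) - 1) :=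
      tsum_congr fun n => by rw [show (-1:ℝ) + 4*(n:ℝ) = 4*(n:ℝ) - 1 by ring]
    have e2 : ∑' n : ℤ, G t r (1 + 4*(n:ℝ)) = ∑' n : ℤ, G t r (4*(n:ℝ) + 1) :=
      tsum_congr fun n => by rw [show (1:ℝ) + 4*(n:ℝ) = 4*(n:ℝ) + 1 by ring]
    rw [e1, e2]
    ring
  rw [← hval]
  apply hD.congr_of_eventuallyEq
  filter_upwards [Ioo_mem_nhds hmem.1 hmem.2] with τ hτ
  exact swap_lemma r τ (by have := hτ.1; linarith) hr'
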